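/- Let f_i : ℝⁿ → ℝ be convex for each i in a finite index set I = {1,…,m}, let g(x) := max_{i∈I} f_i(x), and assume the Slater condition holds, i.e., g(z) < 0 for some z ∈ ℝⁿ. Then for every compact subset K ⊆ ℝⁿ there is a constant δ_K > 0 such that δ_K · d(x, S(g,0)) ≤ g₊(x) for every x ∈ K. -/

import Mathlib

open Metric

/-- Fukushima's lemma: If `f_i : ℝⁿ → ℝ` are convex,
`g = max_i f_i` and the Slater condition `g(z) < 0` holds for some `z`, then for
every compact `K` there is `δ_K > 0` with `δ_K d(x, S(g,0)) ≤ g₊(x)` on `K`. -/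
theorem fukushima_lemma
    {n m : ℕ} [NeZero m] (f : Fin m → EuclideanSpace ℝ (Fin n) → ℝ)
    (hconv : ∀ i, ConvexOn ℝ Set.univ (f i))
    (hSlater : ∃ z : EuclideanSpace ℝ (Fin n),
      (Finset.univ.sup' Finset.univ_nonempty fun i => f i z) < 0) :
    ∀ K : Set (EuclideanSpace ℝ (Fin n)), IsCompact K →
      ∃ δ : ℝ, 0 < δ ∧ ∀ x ∈ K,
        δ * infDist x {y : EuclideanSpace ℝ (Fin n) |
            (Finset.univ.sup' Finset.univ_nonempty fun i => f i y) ≤ 0} ≤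
          max 0 (Finset.univ.sup' Finset.univ_nonempty fun i => f i x) := by
  obtain ⟨z, hz⟩ := hSlater
  intro K hK
  set g : EuclideanSpace ℝ (Fin n) → ℝ :=
    fun x => Finset.univ.sup' Finset.univ_nonempty fun i => f i x with hg
  set S : Set (EuclideanSpace ℝ (Fin n)) := {y | g y ≤ 0} with hS
  -- bound on distance to z on K
  obtain ⟨C0, hC0⟩ := (hK.isBounded).subset_closedBall z
  set C : ℝ := max C0 1 with hC
  have hC1 : (1:ℝ) ≤ C := le_max_right _ _
  have hCpos : (0:ℝ) < C := lt_of_lt_of_le one_pos hC1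
  set b : ℝ := -g z with hb
  have hbpos : 0 < b := by simp [hb]; linarith
  refine ⟨b / C, div_pos hbpos hCpos, ?_⟩
  intro x hxK
  have hDxz : dist x z ≤ C := le_trans (hC0 hxK) (le_max_left _ _)
  by_cases hgx : g x ≤ 0
  · have : x ∈ S := hgx
    rw [infDist_zero_of_mem this]
    simp
  · push_neg at hgx
    set a : ℝ := g x with ha
    have hab : 0 < a + b := by positivity
    set t : ℝ := b / (a + b) with ht
    have ht0 : 0 ≤ t := by positivity
    have ht1 : t ≤ 1 := by
      rw [ht, div_le_one hab]; linarith
    have h1t : 1 - t = a / (a + b) := by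
      rw [ht, eq_div_iff hab.ne', sub_mul, div_mul_cancel₀ _ hab.ne']; ring
    set y : EuclideanSpace ℝ (Fin n) := t • x + (1 - t) • z with hy
    have hyS : y ∈ S := by
      have : g y ≤ t * g x + (1 - t) * g z := by
        apply Finset.sup'_le
        intro i _
        have hfi := (hconv i).2 (Set.mem_univ x) (Set.mem_univ z) ht0
          (by linarith : (0:ℝ) ≤ 1 - t) (by ring)
        refine le_trans hfi ?_
        have h1 : f i x ≤ g x := Finset.le_sup' (fun i => f i x) (Finset.mem_univ i)
        have h2 : f i z ≤ g z := Finset.le_sup' (fun i => f i z) (Finset.mem_univ i)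
        simp only [smul_eq_mul]
        nlinarith [mul_le_mul_of_nonneg_left h1 ht0,
          mul_le_mul_of_nonneg_left h2 (by linarith : (0:ℝ) ≤ 1 - t)]
      have hval : t * g x + (1 - t) * g z = 0 := by
        rw [ht, h1t]
        have hgz : g z = -b := by rw [hb]; ring
        rw [hgz]
        field_simp
        ring
      exact le_of_le_of_eq this hval
    have hd : infDist x S ≤ (1 - t) * dist x z := by
      have h1 : infDist x S ≤ dist x y := infDist_le_dist_of_mem hyS
      have h2 : x - y = (1 - t) • (x - z) := by
        rw [hy]; module
      have h3 : dist x y = (1 - t) * dist x z := by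
        rw [dist_eq_norm, dist_eq_norm, h2, norm_smul, Real.norm_eq_abs,
          abs_of_nonneg (by linarith : (0:ℝ) ≤ 1 - t)]
      linarith [h1, h3.le]
    -- final arithmetic
    have hdist0 : 0 ≤ dist x z := dist_nonneg
    have hinf0 : 0 ≤ infDist x S := infDist_nonneg
    have key : (a + b) * infDist x S ≤ a * dist x z := by
      rw [h1t] at hd
      calc (a + b) * infDist x S ≤ (a + b) * (a / (a + b) * dist x z) := by
            exact mul_le_mul_of_nonneg_left hd (le_of_lt hab)
        _ = a * dist x z := by field_simp
    have hmax : max 0 (g x) = a := by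
      rw [max_eq_right (le_of_lt hgx)]
    rw [hmax]
    rw [div_mul_eq_mul_div, div_le_iff₀ hCpos]
    nlinarith [mul_le_mul_of_nonneg_left hDxz (le_of_lt (lt_of_lt_of_le hgx le_rfl))]
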